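/- Let w ∼ w' ∈ Σⁿ be neighboring strings compressed by the LZ77 compression algorithm with self-referencing (unbounded window). Then the number t₂ of type-2 blocks among the blocks of Compress_SR(w) satisfies t₂ ≤ (∛9/2)·n^{2/3} + (∛3/2)·n^{1/3} + 1. -/

import Mathlib

/-- A single LZ77 block `[q, len, c]`. -/
structure LZBlock (α : Type*) where
  q : ℕ
  len : ℕ
  c : α

/-- `s_i` (1-indexed start position of the `i`-th block, `i` 0-indexed). -/
def blockStart {α : Type*} (B : List (LZBlock α)) (i : ℕ) : ℕ :=
  1 + ((B.take i).map (fun b => b.len + 1)).sum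

/-- `f_i` (1-indexed final position of the `i`-th block, `i` 0-indexed). -/
def blockFin {α : Type*} (B : List (LZBlock α)) (i : ℕ) : ℕ :=
  ((B.take (i + 1)).map (fun b => b.len + 1)).sum

/-- `ℓ_i`, recovered as `f_i - s_i`. -/
def lenAt {α : Type*} (B : List (LZBlock α)) (i : ℕ) : ℕ :=
  blockFin B i - blockStart B i

/-- Non-overlapping LZ77 parse, sliding window `W`, of the length-`n` string `w`
(1-indexed positions). -/
def IsLZ77Parse {α : Type*} (W n : ℕ) (w : ℕ → α) (B : List (LZBlock α)) : Prop :=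
  ((B.map (fun b => b.len + 1)).sum = n) ∧
  ∀ i : Fin B.length,
    ((B.get i).c = w (blockStart B i.1 + (B.get i).len)) ∧
    ((B.get i).len = 0 → (B.get i).q = 0) ∧
    (0 < (B.get i).len →
      1 ≤ (B.get i).q ∧
      blockStart B i.1 ≤ (B.get i).q + W ∧
      (B.get i).q + (B.get i).len ≤ blockStart B i.1 ∧
      ∀ d < (B.get i).len, w ((B.get i).q + d) = w (blockStart B i.1 + d)) ∧
    (blockStart B i.1 + (B.get i).len + 1 ≤ n →
      ¬ ∃ q', 1 ≤ q' ∧ blockStart B i.1 ≤ q' + W ∧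
          q' + (B.get i).len + 1 ≤ blockStart B i.1 ∧
          ∀ d ≤ (B.get i).len, w (q' + d) = w (blockStart B i.1 + d))

/-- LZ77 parse with self-referencing (unbounded window). -/
def IsLZ77SRParse {α : Type*} (n : ℕ) (w : ℕ → α) (B : List (LZBlock α)) : Prop :=
  ((B.map (fun b => b.len + 1)).sum = n) ∧
  ∀ i : Fin B.length,
    ((B.get i).c = w (blockStart B i.1 + (B.get i).len)) ∧
    ((B.get i).len = 0 → (B.get i).q = 0) ∧
    (0 < (B.get i).len →
      1 ≤ (B.get i).q ∧
      (B.get i).q < blockStart B i.1 ∧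
      ∀ d < (B.get i).len, w ((B.get i).q + d) = w (blockStart B i.1 + d)) ∧
    (blockStart B i.1 + (B.get i).len + 1 ≤ n →
      ¬ ∃ q', 1 ≤ q' ∧ q' < blockStart B i.1 ∧
          ∀ d ≤ (B.get i).len, w (q' + d) = w (blockStart B i.1 + d))

/-- `w ∼ w'`: strings of length `n` differing in exactly one position. -/
def Neighbor {α : Type*} (n : ℕ) (w w' : ℕ → α) : Prop :=
  ∃ j, 1 ≤ j ∧ j ≤ n ∧ w j ≠ w' j ∧ ∀ i, i ≠ j → w i = w' i

/-- `M_i`: the set of (0-indexed) blocks of `B'` that start inside block `i` of `B`. -/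
def Mset {α : Type*} (B B' : List (LZBlock α)) (i : ℕ) : Finset ℕ :=
  (Finset.range B'.length).filter
    (fun k => blockStart B i ≤ blockStart B' k ∧ blockStart B' k ≤ blockFin B i)

/-- Indices of type-`m` blocks of `B` (relative to `B'`). -/
def typeSet {α : Type*} (B B' : List (LZBlock α)) (m : ℕ) : Finset ℕ :=
  (Finset.range B.length).filter (fun i => (Mset B B' i).card = m)

/-- Number of bits used to encode each block. -/
def codeLen (n cardS : ℕ) : ℕ :=
  2 * Nat.clog 2 n + Nat.clog 2 cardS

namespace LZaux

lemma sum_take_le (l : List ℕ) (i : ℕ) : (l.take i).sum ≤ l.sum := by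
  conv_rhs => rw [← List.take_append_drop i l]
  rw [List.sum_append]
  exact Nat.le_add_right _ _

lemma blockStart_mono {α : Type*} (B : List (LZBlock α)) {i i' : ℕ} (h : i ≤ i') :
    blockStart B i ≤ blockStart B i' := by
  unfold blockStart
  have h1 : (B.take i).map (fun b => b.len + 1)
      = ((B.take i').map (fun b => b.len + 1)).take i := by
    rw [← List.map_take, List.take_take, Nat.min_eq_left h]
  rw [h1]
  exact Nat.add_le_add_left (sum_take_le _ _) 1

lemma blockFin_eq {α : Type*} (B : List (LZBlock α)) (d : LZBlock α) {i : ℕ}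
    (h : i < B.length) :
    blockFin B i = blockStart B i + (B.getD i d).len := by
  unfold blockFin blockStart
  rw [List.take_succ, List.getElem?_eq_getElem h]
  simp only [Option.toList_some, List.map_append, List.sum_append, List.map_cons,
    List.map_nil, List.sum_cons, List.sum_nil, List.getD_eq_getElem _ _ h]
  omega

lemma blockStart_succ {α : Type*} (B : List (LZBlock α)) (i : ℕ) :
    blockStart B (i + 1) = blockFin B i + 1 := by
  unfold blockStart blockFin; omega

lemma one_le_blockStart {α : Type*} (B : List (LZBlock α)) (i : ℕ) :
    1 ≤ blockStart B i := by
  unfold blockStart; omega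

lemma blockFin_le {α : Type*} (B : List (LZBlock α)) {n : ℕ}
    (hsum : (B.map (fun b => b.len + 1)).sum = n) (i : ℕ) : blockFin B i ≤ n := by
  unfold blockFin
  rw [← hsum, List.map_take]
  exact sum_take_le _ _

lemma sum_lens {α : Type*} (B : List (LZBlock α)) (d : LZBlock α) :
    ∑ i ∈ Finset.range B.length, ((B.getD i d).len + 1)
      = (B.map (fun b => b.len + 1)).sum := by
  induction B using List.reverseRecOn with
  | nil => simp
  | append_singleton l b ih =>
    rw [List.length_append, List.length_singleton, Finset.sum_range_succ]
    have h1 : ∀ i ∈ Finset.range l.length,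
        ((l ++ [b]).getD i d).len + 1 = (l.getD i d).len + 1 := by
      intro i hi
      rw [Finset.mem_range] at hi
      rw [List.getD_append _ _ _ _ hi]
    rw [Finset.sum_congr rfl h1, ih]
    have h2 : (l ++ [b]).getD l.length d = b := by
      rw [List.getD_eq_getElem _ _ (by simp)]
      simp
    rw [h2]
    simp

lemma gauss (N : ℕ) : 2 * (∑ m ∈ Finset.range N, (m + 1)) = N * (N + 1) := by
  induction N with
  | zero => simp
  | succ k ih => rw [Finset.sum_range_succ, Nat.mul_add, ih]; ring

lemma DK6 (K : ℕ) :
    6 * ∑ m ∈ Finset.range (K + 1), (m + 1) * (K + 1 - m) = (K + 1) * (K + 2) * (K + 3) := by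
  induction K with
  | zero => decide
  | succ k ih =>
    have hsplit : ∀ m ∈ Finset.range (k + 2),
        (m + 1) * (k + 1 + 1 - m) = (m + 1) * (k + 1 - m) + (m + 1) := by
      intro m hm
      rw [Finset.mem_range] at hm
      have : k + 1 + 1 - m = (k + 1 - m) + 1 := by omega
      rw [this]; ring
    rw [Finset.sum_congr rfl hsplit, Finset.sum_add_distrib,
      Finset.sum_range_succ (f := fun m => (m + 1) * (k + 1 - m))]
    have h0 : (k + 1 + 1) * (k + 1 - (k + 1)) = 0 := by simp
    rw [h0, Nat.add_zero]
    have hg := gauss (k + 2)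
    calc 6 * (∑ m ∈ Finset.range (k + 1), (m + 1) * (k + 1 - m)
            + ∑ m ∈ Finset.range (k + 2), (m + 1))
        = 6 * ∑ m ∈ Finset.range (k + 1), (m + 1) * (k + 1 - m)
            + 3 * (2 * ∑ m ∈ Finset.range (k + 2), (m + 1)) := by ring
      _ = (k + 1) * (k + 2) * (k + 3) + 3 * ((k + 2) * (k + 3)) := by rw [ih, hg]
      _ = (k + 1 + 1) * (k + 1 + 2) * (k + 1 + 3) := by ring

end LZaux

/-- Lemma: bound on the number of type-2 blocks for LZ77 with
self-referencing, unbounded window. For neighboring strings `w ∼ w' ∈ Σⁿ`,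
the number of type-2 blocks among the blocks of `Compress_SR(w)` satisfies
`t₂ ≤ (∛9/2)·n^(2/3) + (∛3/2)·n^(1/3) + 1`. -/
theorem lz77SR_typeTwo_count_bound {α : Type*} (n : ℕ) (w w' : ℕ → α)
    (hnb : Neighbor n w w')
    (B B' : List (LZBlock α))
    (hB : IsLZ77SRParse n w B) (hB' : IsLZ77SRParse n w' B') :
    (((typeSet B B' 2).card : ℝ)) ≤
      (9 : ℝ) ^ ((1 : ℝ) / 3) / 2 * (n : ℝ) ^ ((2 : ℝ) / 3)
        + (3 : ℝ) ^ ((1 : ℝ) / 3) / 2 * (n : ℝ) ^ ((1 : ℝ) / 3) + 1 := by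
  classical
  obtain ⟨j, hj1, hjn, -, hjeq⟩ := hnb
  have hn1 : 1 ≤ n := hj1.trans hjn
  set d0 : LZBlock α := ⟨0, 0, w 0⟩ with hd0
  set T2 : Finset ℕ := typeSet B B' 2 with hT2def
  set S : Finset ℕ :=
    T2.filter (fun i => ¬ (blockStart B i ≤ j ∧ j ≤ blockFin B i)) with hSdef
  -- getD/get conversions
  have hgetB : ∀ {i : ℕ} (h : i < B.length), B.get ⟨i, h⟩ = B.getD i d0 := by
    intro i h
    rw [List.get_eq_getElem, List.getD_eq_getElem _ _ h]
  have hgetB' : ∀ {k : ℕ} (h : k < B'.length), B'.get ⟨k, h⟩ = B'.getD k d0 := by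
    intro k h
    rw [List.get_eq_getElem, List.getD_eq_getElem _ _ h]
  -- membership unpacking for S
  have hSmem : ∀ i ∈ S, i < B.length ∧ (Mset B B' i).card = 2 ∧
      (j < blockStart B i ∨ blockFin B i < j) := by
    intro i hi
    rw [hSdef, Finset.mem_filter, hT2def, typeSet, Finset.mem_filter,
      Finset.mem_range] at hi
    refine ⟨hi.1.1, hi.1.2, ?_⟩
    have := hi.2
    omega
  -- block i of B facts (copy)
  have hcopyB : ∀ i ∈ S, 0 < (B.getD i d0).len →
      1 ≤ (B.getD i d0).q ∧ (B.getD i d0).q < blockStart B i ∧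
      ∀ d < (B.getD i d0).len,
        w ((B.getD i d0).q + d) = w (blockStart B i + d) := by
    intro i hi hpos
    have hiB := (hSmem i hi).1
    have h3 := (hB.2 ⟨i, hiB⟩).2.2.1
    rw [hgetB hiB] at h3
    exact h3 hpos
  -- maximality of B' blocks
  have hmaxB' : ∀ k : ℕ, ∀ h : k < B'.length,
      blockStart B' k + (B'.getD k d0).len + 1 ≤ n →
      ¬ ∃ q', 1 ≤ q' ∧ q' < blockStart B' k ∧
          ∀ d ≤ (B'.getD k d0).len, w' (q' + d) = w' (blockStart B' k + d) := by
    intro k h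
    have h4 := (hB'.2 ⟨k, h⟩).2.2.2
    rw [hgetB' h] at h4
    exact h4
  -- main structural fact
  have main : ∀ i : ℕ, ∃ k : ℕ, i ∈ S →
      k < B'.length ∧
      blockStart B i ≤ blockStart B' k ∧
      blockStart B' k + (B'.getD k d0).len < blockFin B i ∧
      ((B.getD i d0).q + (blockStart B' k - blockStart B i) ≤ j ∧
        j ≤ (B.getD i d0).q + (blockStart B' k - blockStart B i)
              + (B'.getD k d0).len) := by
    intro i
    by_cases hi : i ∈ S
    swap
    · exact ⟨0, fun h => absurd h hi⟩
    obtain ⟨hiB, hcard, hne⟩ := hSmem i hi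
    have h2 : ∃ a ∈ Mset B B' i, ∃ b ∈ Mset B B' i, a ≠ b := by
      rw [← Finset.one_lt_card]
      omega
    obtain ⟨a, ha, b, hb, hab⟩ := h2
    obtain ⟨k, hk, k2, hk2, hkk⟩ :
        ∃ k ∈ Mset B B' i, ∃ k2 ∈ Mset B B' i, k < k2 := by
      rcases Nat.lt_or_ge a b with h | h
      · exact ⟨a, ha, b, hb, h⟩
      · exact ⟨b, hb, a, ha, lt_of_le_of_ne h (Ne.symm hab)⟩
    refine ⟨k, fun _ => ?_⟩
    rw [Mset, Finset.mem_filter, Finset.mem_range] at hk hk2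
    obtain ⟨hkB', hks, hkf⟩ := hk
    obtain ⟨hk2B', hk2s, hk2f⟩ := hk2
    have e1 : blockFin B' k = blockStart B' k + (B'.getD k d0).len :=
      LZaux.blockFin_eq B' d0 hkB'
    have e2 : blockStart B' (k + 1) = blockFin B' k + 1 := LZaux.blockStart_succ B' k
    have e3 : blockStart B' (k + 1) ≤ blockStart B' k2 := LZaux.blockStart_mono B' hkk
    have hfin' : blockStart B' k + (B'.getD k d0).len < blockFin B i := by omega
    refine ⟨hkB', hks, hfin', ?_⟩
    by_contra hcon
    have hpj : j < (B.getD i d0).q + (blockStart B' k - blockStart B i) ∨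
        (B.getD i d0).q + (blockStart B' k - blockStart B i)
          + (B'.getD k d0).len < j := by
      by_cases hle : (B.getD i d0).q + (blockStart B' k - blockStart B i) ≤ j
      · right
        by_contra hno
        exact hcon ⟨hle, by omega⟩
      · left; omega
    have hfin_eq : blockFin B i = blockStart B i + (B.getD i d0).len :=
      LZaux.blockFin_eq B d0 hiB
    have hlpos : 0 < (B.getD i d0).len := by omega
    obtain ⟨hq1, hqlt, hcopy⟩ := hcopyB i hi hlpos
    have hfle : blockFin B i ≤ n := LZaux.blockFin_le B hB.1 i
    refine hmaxB' k hkB' (by omega)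
      ⟨(B.getD i d0).q + (blockStart B' k - blockStart B i), by omega, by omega, ?_⟩
    intro d hd
    have ha1 : w' ((B.getD i d0).q + (blockStart B' k - blockStart B i) + d)
        = w ((B.getD i d0).q + (blockStart B' k - blockStart B i) + d) :=
      (hjeq _ (by omega)).symm
    have ha2 : w ((B.getD i d0).q + (blockStart B' k - blockStart B i) + d)
        = w (blockStart B i + ((blockStart B' k - blockStart B i) + d)) := by
      have heq : (B.getD i d0).q + (blockStart B' k - blockStart B i) + d
          = (B.getD i d0).q + ((blockStart B' k - blockStart B i) + d) := by omega
      rw [heq]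
      exact hcopy _ (by omega)
    have ha3 : blockStart B i + ((blockStart B' k - blockStart B i) + d)
        = blockStart B' k + d := by omega
    have ha4 : w (blockStart B' k + d) = w' (blockStart B' k + d) :=
      hjeq _ (by omega)
    rw [ha1, ha2, ha3, ha4]
  choose kf hkf using main
  set mf : ℕ → ℕ := fun i => (B'.getD (kf i) d0).len with hmf
  set pf : ℕ → ℕ :=
    fun i => (B.getD i d0).q + (blockStart B' (kf i) - blockStart B i) with hpf
  -- injectivity on S
  have hinjlt : ∀ i1 ∈ S, ∀ i2 ∈ S, i1 < i2 →
      mf i1 = mf i2 → pf i1 = pf i2 → False := by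
    intro i1 hi1 i2 hi2 hlt hm hp
    simp only [hmf] at hm
    simp only [hpf] at hp
    obtain ⟨hk1B', hk1s, hk1f, hpj1⟩ := hkf i1 hi1
    obtain ⟨hk2B', hk2s, hk2f, hpj2⟩ := hkf i2 hi2
    obtain ⟨hi1B, -, hne1⟩ := hSmem i1 hi1
    obtain ⟨hi2B, -, hne2⟩ := hSmem i2 hi2
    have hfin1 : blockFin B i1 = blockStart B i1 + (B.getD i1 d0).len :=
      LZaux.blockFin_eq B d0 hi1B
    have hfin2 : blockFin B i2 = blockStart B i2 + (B.getD i2 d0).len :=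
      LZaux.blockFin_eq B d0 hi2B
    have hl1pos : 0 < (B.getD i1 d0).len := by omega
    have hl2pos : 0 < (B.getD i2 d0).len := by omega
    obtain ⟨hq11, hq1lt, hcopy1⟩ := hcopyB i1 hi1 hl1pos
    obtain ⟨hq21, hq2lt, hcopy2⟩ := hcopyB i2 hi2 hl2pos
    have hord : blockFin B i1 < blockStart B i2 := by
      have e2 : blockStart B (i1 + 1) = blockFin B i1 + 1 := LZaux.blockStart_succ B i1
      have e3 : blockStart B (i1 + 1) ≤ blockStart B i2 := LZaux.blockStart_mono B hlt
      omega
    have hfle2 : blockFin B i2 ≤ n := LZaux.blockFin_le B hB.1 i2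
    have h1le : 1 ≤ blockStart B' (kf i1) := LZaux.one_le_blockStart B' (kf i1)
    refine hmaxB' (kf i2) hk2B' (by omega) ⟨blockStart B' (kf i1), h1le, by omega, ?_⟩
    intro d hd
    -- w'(s'k1+d) = w(s'k1+d)
    have hb1 : w' (blockStart B' (kf i1) + d) = w (blockStart B' (kf i1) + d) :=
      (hjeq _ (by omega)).symm
    -- w(s'k1+d) = w(pf i1 + d)
    have hb2 : w (blockStart B' (kf i1) + d) = w (pf i1 + d) := by
      have heq : blockStart B' (kf i1) + d
          = blockStart B i1 + ((blockStart B' (kf i1) - blockStart B i1) + d) := by omega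
      rw [heq, show pf i1 + d
          = (B.getD i1 d0).q + ((blockStart B' (kf i1) - blockStart B i1) + d) by
        simp only [hpf]; omega]
      exact (hcopy1 _ (by omega)).symm
    -- w(pf i2 + d) = w(s'k2 + d)
    have hb3 : w (pf i2 + d) = w (blockStart B' (kf i2) + d) := by
      have heq : blockStart B' (kf i2) + d
          = blockStart B i2 + ((blockStart B' (kf i2) - blockStart B i2) + d) := by omega
      rw [heq, show pf i2 + d
          = (B.getD i2 d0).q + ((blockStart B' (kf i2) - blockStart B i2) + d) by
        simp only [hpf]; omega]
      exact hcopy2 _ (by omega)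
    have hb4 : w (blockStart B' (kf i2) + d) = w' (blockStart B' (kf i2) + d) :=
      hjeq _ (by omega)
    have hpp : pf i1 + d = pf i2 + d := by simp only [hpf]; omega
    rw [hb1, hb2, hpp, hb3, hb4]
  -- card of exceptional part
  have hcardsplit : T2.card ≤ S.card + 1 := by
    have hfilters := Finset.card_filter_add_card_filter_not
      (s := T2) (p := fun i => blockStart B i ≤ j ∧ j ≤ blockFin B i)
    have hE1 : (T2.filter (fun i => blockStart B i ≤ j ∧ j ≤ blockFin B i)).card ≤ 1 := by
      rw [Finset.card_le_one]
      intro a ha b hb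
      rw [Finset.mem_filter] at ha hb
      by_contra hab
      rcases Nat.lt_or_ge a b with h | h
      · have e2 : blockStart B (a + 1) = blockFin B a + 1 := LZaux.blockStart_succ B a
        have e3 : blockStart B (a + 1) ≤ blockStart B b := LZaux.blockStart_mono B h
        have := ha.2; have := hb.2; omega
      · have h' : b < a := lt_of_le_of_ne h (fun hh => hab hh.symm)
        have e2 : blockStart B (b + 1) = blockFin B b + 1 := LZaux.blockStart_succ B b
        have e3 : blockStart B (b + 1) ≤ blockStart B a := LZaux.blockStart_mono B h'
        have := ha.2; have := hb.2; omega
    rw [hSdef]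
    omega
  -- sum of weights bounded by n
  have hmlen : ∀ i ∈ S, mf i + 1 ≤ (B.getD i d0).len := by
    intro i hi
    obtain ⟨hkB', hks, hkfin, -⟩ := hkf i hi
    have hfin_eq : blockFin B i = blockStart B i + (B.getD i d0).len :=
      LZaux.blockFin_eq B d0 (hSmem i hi).1
    have : mf i = (B'.getD (kf i) d0).len := rfl
    omega
  have hSsub : S ⊆ Finset.range B.length := by
    intro i hi
    exact Finset.mem_range.mpr (hSmem i hi).1
  have hsumn : ∑ i ∈ S, (mf i + 2) ≤ n := by
    calc ∑ i ∈ S, (mf i + 2) ≤ ∑ i ∈ S, ((B.getD i d0).len + 1) := by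
          apply Finset.sum_le_sum
          intro i hi
          have := hmlen i hi
          omega
      _ ≤ ∑ i ∈ Finset.range B.length, ((B.getD i d0).len + 1) :=
          Finset.sum_le_sum_of_subset hSsub
      _ = n := by rw [LZaux.sum_lens B d0, hB.1]
  -- capacity bound
  have hcap : ∀ K : ℕ, ∑ i ∈ S, (K + 1 - mf i)
      ≤ ∑ m ∈ Finset.range (K + 1), (m + 1) * (K + 1 - m) := by
    intro K
    set S' : Finset ℕ := S.filter (fun i => mf i ≤ K) with hS'def
    have hstep1 : ∑ i ∈ S, (K + 1 - mf i) = ∑ i ∈ S', (K + 1 - mf i) := by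
      rw [hS'def]
      refine (Finset.sum_subset (Finset.filter_subset _ _) ?_).symm
      intro i hi hni
      rw [Finset.mem_filter] at hni
      have : ¬ mf i ≤ K := fun h => hni ⟨hi, h⟩
      omega
    set F : ℕ → (_ : ℕ) × ℕ := fun i => ⟨mf i, pf i⟩ with hF
    set big : Finset ((_ : ℕ) × ℕ) :=
      (Finset.range (K + 1)).sigma (fun m => Finset.Icc (j - m) j) with hbig
    have hstep2 : ∑ i ∈ S', (K + 1 - mf i) = ∑ y ∈ S'.image F, (K + 1 - y.1) := by
      rw [Finset.sum_image]
      intro i1 hi1 i2 hi2 hFeq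
      rw [Finset.mem_coe, Finset.mem_filter] at hi1 hi2
      have hm : mf i1 = mf i2 := congrArg Sigma.fst hFeq
      have hp : pf i1 = pf i2 := by
        have := congrArg Sigma.snd hFeq
        simpa using this
      by_contra hne
      rcases Nat.lt_or_ge i1 i2 with h | h
      · exact hinjlt i1 hi1.1 i2 hi2.1 h hm hp
      · exact hinjlt i2 hi2.1 i1 hi1.1 (lt_of_le_of_ne h (fun hh => hne hh.symm))
          hm.symm hp.symm
    have hsub : S'.image F ⊆ big := by
      intro y hy
      rw [Finset.mem_image] at hy
      obtain ⟨i, hi, hyeq⟩ := hy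
      rw [Finset.mem_filter] at hi
      obtain ⟨-, -, -, hpj1, hpj2⟩ := hkf i hi.1
      subst hyeq
      have hiK : mf i ≤ K := hi.2
      simp only [hF, hbig, Finset.mem_sigma, Finset.mem_range, Finset.mem_Icc]
      simp only [hmf, hpf] at hiK ⊢
      refine ⟨by omega, by omega, by omega⟩
    have hstep3 : ∑ y ∈ S'.image F, (K + 1 - y.1) ≤ ∑ y ∈ big, (K + 1 - y.1) :=
      Finset.sum_le_sum_of_subset hsub
    have hstep4 : ∑ y ∈ big, (K + 1 - y.1)
        = ∑ m ∈ Finset.range (K + 1), (Finset.Icc (j - m) j).card * (K + 1 - m) := by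
      rw [hbig, Finset.sum_sigma]
      refine Finset.sum_congr rfl ?_
      intro m hm
      show ∑ _s ∈ Finset.Icc (j - m) j, (K + 1 - m) = _
      rw [Finset.sum_const, smul_eq_mul]
    have hstep5 : ∑ m ∈ Finset.range (K + 1), (Finset.Icc (j - m) j).card * (K + 1 - m)
        ≤ ∑ m ∈ Finset.range (K + 1), (m + 1) * (K + 1 - m) := by
      apply Finset.sum_le_sum
      intro m hm
      have : (Finset.Icc (j - m) j).card = j + 1 - (j - m) := Nat.card_Icc _ _
      have hle : (Finset.Icc (j - m) j).card ≤ m + 1 := by omega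
      exact Nat.mul_le_mul_right _ hle
    omega
  -- key counting inequality
  have hKT : ∀ K : ℕ, 6 * ((K + 3) * S.card) ≤ 6 * n + (K + 1) * (K + 2) * (K + 3) := by
    intro K
    have h1 : (K + 3) * S.card = ∑ i ∈ S, (K + 3) := by
      rw [Finset.sum_const, smul_eq_mul, Nat.mul_comm]
    have h2 : ∑ i ∈ S, (K + 3) ≤ ∑ i ∈ S, ((mf i + 2) + (K + 1 - mf i)) := by
      apply Finset.sum_le_sum
      intro i hi
      omega
    have h3 : ∑ i ∈ S, ((mf i + 2) + (K + 1 - mf i))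
        = ∑ i ∈ S, (mf i + 2) + ∑ i ∈ S, (K + 1 - mf i) := Finset.sum_add_distrib
    have h4 := hcap K
    have h5 := LZaux.DK6 K
    have h6 := hsumn
    omega
  -- real analysis endgame
  have hcard : ((typeSet B B' 2).card : ℝ) ≤ (S.card : ℝ) + 1 := by
    rw [← hT2def]
    have : (T2.card : ℝ) ≤ ((S.card + 1 : ℕ) : ℝ) := Nat.cast_le.mpr hcardsplit
    push_cast at this
    linarith
  set X : ℝ := ((3 : ℝ) * n) ^ ((1 : ℝ) / 3) with hX
  have hn1R : (1 : ℝ) ≤ (n : ℝ) := by exact_mod_cast hn1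
  have hXpos : (0 : ℝ) < 3 * n := by linarith
  have hX1 : 1 < X := by
    rw [hX]
    rw [Real.one_lt_rpow_iff_of_pos hXpos]
    left
    constructor
    · linarith
    · norm_num
  have hX3 : X ^ (3 : ℕ) = 3 * n := by
    rw [hX, ← Real.rpow_natCast (((3 : ℝ) * n) ^ ((1 : ℝ) / 3)) 3,
      ← Real.rpow_mul (le_of_lt hXpos)]
    norm_num
  have hceil2 : 2 ≤ ⌈X⌉₊ := by
    have h1 : 1 < ⌈X⌉₊ := by
      rw [Nat.lt_ceil]
      exact_mod_cast hX1
    omega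
  set Kn : ℕ := ⌈X⌉₊ - 2 with hKn
  set y : ℝ := (⌈X⌉₊ : ℝ) with hy
  have hKcast : (Kn : ℝ) = y - 2 := by
    rw [hKn, hy, Nat.cast_sub hceil2]
    norm_num
  have hyX : X ≤ y := Nat.le_ceil X
  have hyX1 : y ≤ X + 1 := le_of_lt (Nat.ceil_lt_add_one (by linarith))
  have hreal : 6 * ((y + 1) * (S.card : ℝ)) ≤ 6 * n + (y - 1) * y * (y + 1) := by
    have h0 := hKT Kn
    have h6 : (6 : ℝ) * (((Kn : ℝ) + 3) * (S.card : ℝ))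
        ≤ 6 * (n : ℝ) + ((Kn : ℝ) + 1) * ((Kn : ℝ) + 2) * ((Kn : ℝ) + 3) := by
      exact_mod_cast h0
    rw [hKcast] at h6
    have e1 : y - 2 + 3 = y + 1 := by ring
    have e2 : y - 2 + 1 = y - 1 := by ring
    have e3 : y - 2 + 2 = y := by ring
    rw [e1, e2, e3] at h6
    exact h6
  have hTX : 2 * (S.card : ℝ) ≤ X ^ 2 + X := by
    have h6n : 6 * (n : ℝ) = 2 * X ^ (3 : ℕ) := by rw [hX3]; ring
    rw [h6n] at hreal
    have hy1 : (0 : ℝ) < y + 1 := by linarith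
    have key : 2 * X ^ (3 : ℕ) + (y - 1) * y * (y + 1) ≤ 3 * (y + 1) * (X ^ 2 + X) := by
      nlinarith [mul_nonneg (mul_nonneg (sub_nonneg.2 hyX) (sub_nonneg.2 hyX1))
          (le_of_lt (lt_trans one_pos hX1)),
        mul_nonneg (sub_nonneg.2 hyX) (sub_nonneg.2 hyX1),
        sq_nonneg (y - X), sq_nonneg (X + 1 - y), hX1, hyX, hyX1]
    nlinarith [hreal, key, hy1, Nat.cast_nonneg (α := ℝ) S.card,
      mul_pos hy1 (by linarith : (0:ℝ) < 1)]
  have hXsplit : X = (3 : ℝ) ^ ((1 : ℝ) / 3) * (n : ℝ) ^ ((1 : ℝ) / 3) := by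
    rw [hX, Real.mul_rpow (by norm_num) (Nat.cast_nonneg n)]
  have hXsq : X ^ 2 = (9 : ℝ) ^ ((1 : ℝ) / 3) * (n : ℝ) ^ ((2 : ℝ) / 3) := by
    rw [hXsplit, mul_pow]
    congr 1
    · rw [← Real.rpow_natCast ((3 : ℝ) ^ ((1 : ℝ) / 3)) 2,
        ← Real.rpow_mul (by norm_num : (0:ℝ) ≤ 3)]
      rw [show (9 : ℝ) = (3 : ℝ) ^ (2 : ℝ) by
        rw [show ((2:ℝ)) = ((2:ℕ):ℝ) by norm_num, Real.rpow_natCast]; norm_num]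
      rw [← Real.rpow_mul (by norm_num : (0:ℝ) ≤ 3)]
      norm_num
    · rw [← Real.rpow_natCast ((n : ℝ) ^ ((1 : ℝ) / 3)) 2,
        ← Real.rpow_mul (Nat.cast_nonneg n)]
      norm_num
  calc ((typeSet B B' 2).card : ℝ) ≤ (S.card : ℝ) + 1 := hcard
    _ ≤ (X ^ 2 + X) / 2 + 1 := by linarith
    _ = (9 : ℝ) ^ ((1 : ℝ) / 3) / 2 * (n : ℝ) ^ ((2 : ℝ) / 3)
        + (3 : ℝ) ^ ((1 : ℝ) / 3) / 2 * (n : ℝ) ^ ((1 : ℝ) / 3) + 1 := by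
      rw [hXsq] at *
      rw [hXsplit]
      ring
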